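/- Let A be a finite nonempty set, δ ∈ [0,1), and s, s^Rep : A → ℝ functions with values in [0,1]. Let (v_t)_{t∈ℕ} be a sequence of probability vectors on A satisfying ⟨s^Rep, v_{t+1}⟩ = ⟨s, v_t⟩ for all t ∈ ℕ, and set s_0 = ⟨s^Rep, v_0⟩. Then lim_{T→∞} (Σ_{t=0}^{T−1} δ^t · ⟨δ·s + (1−δ)·s_0·𝟙 − s^Rep, v_t⟩) / (Σ_{t=0}^{T−1} δ^t) = 0, where 𝟙 : A → ℝ is the constant function 1. (Abstract form of the paper's Theorem 3, second case: for a Markov strategy in a δ-repeated game, δ·s + (1−δ)·s_{0}·𝟙 − s^Rep is a ruling vector.) -/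

import Mathlib

open Filter Finset Topology

/-- Abstract form of the paper's Theorem 3, second case: in a `δ`-repeated game,
`δ • s + (1 - δ) • s₀ • 𝟙 - s^Rep` is a ruling vector for a Markov strategy. -/
theorem stmt4 {A : Type*} [Fintype A] [Nonempty A]
    (δ : ℝ) (hδ : δ ∈ Set.Ico (0 : ℝ) 1)
    (s sRep : A → ℝ)
    (hs : ∀ a, s a ∈ Set.Icc (0 : ℝ) 1)
    (hsRep : ∀ a, sRep a ∈ Set.Icc (0 : ℝ) 1)
    (v : ℕ → A → ℝ)
    (hv_nonneg : ∀ t a, 0 ≤ v t a)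
    (hv_sum : ∀ t, ∑ a, v t a = 1)
    (hstep : ∀ t, ∑ a, sRep a * v (t + 1) a = ∑ a, s a * v t a)
    (s₀ : ℝ) (hs₀ : s₀ = ∑ a, sRep a * v 0 a) :
    Tendsto
      (fun T =>
        (∑ t ∈ Finset.range T,
          δ ^ t * (∑ a, (δ * s a + (1 - δ) * s₀ * 1 - sRep a) * v t a)) /
        (∑ t ∈ Finset.range T, δ ^ t)) atTop (𝓝 0) := by
  obtain ⟨hδ0, hδ1⟩ := hδ
  set x : ℕ → ℝ := fun t => ∑ a, sRep a * v t a with hx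
  have hxb : ∀ t, x t ∈ Set.Icc (0 : ℝ) 1 := by
    intro t
    constructor
    · exact Finset.sum_nonneg fun a _ => mul_nonneg (hsRep a).1 (hv_nonneg t a)
    · calc x t ≤ ∑ a, 1 * v t a :=
            Finset.sum_le_sum fun a _ =>
              mul_le_mul_of_nonneg_right (hsRep a).2 (hv_nonneg t a)
        _ = 1 := by simp [hv_sum t]
  -- inner sum rewrite
  have hinner : ∀ t, (∑ a, (δ * s a + (1 - δ) * s₀ * 1 - sRep a) * v t a)
      = δ * x (t + 1) + (1 - δ) * s₀ - x t := by
    intro t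
    have : (∑ a, (δ * s a + (1 - δ) * s₀ * 1 - sRep a) * v t a)
        = δ * (∑ a, s a * v t a) + (1 - δ) * s₀ * (∑ a, v t a)
          - ∑ a, sRep a * v t a := by
      rw [Finset.mul_sum, Finset.mul_sum, ← Finset.sum_add_distrib,
        ← Finset.sum_sub_distrib]
      apply Finset.sum_congr rfl
      intro a _
      ring
    rw [this, hv_sum t, ← hstep t]
    simp [hx]
  -- numerator closed form
  have hnum : ∀ T, (∑ t ∈ Finset.range T,
      δ ^ t * (∑ a, (δ * s a + (1 - δ) * s₀ * 1 - sRep a) * v t a))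
      = δ ^ T * (x T - s₀) := by
    intro T
    have htel : ∀ T, (∑ t ∈ Finset.range T,
        (δ ^ (t + 1) * x (t + 1) - δ ^ t * x t)) = δ ^ T * x T - δ ^ 0 * x 0 :=
      fun T => Finset.sum_range_sub (fun t => δ ^ t * x t) T
    have hδne : δ - 1 ≠ 0 := by linarith
    calc (∑ t ∈ Finset.range T,
          δ ^ t * (∑ a, (δ * s a + (1 - δ) * s₀ * 1 - sRep a) * v t a))
        = ∑ t ∈ Finset.range T,
            ((δ ^ (t + 1) * x (t + 1) - δ ^ t * x t) + (1 - δ) * s₀ * δ ^ t) := by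
          apply Finset.sum_congr rfl
          intro t _
          rw [hinner t]
          ring
      _ = (δ ^ T * x T - δ ^ 0 * x 0) + (1 - δ) * s₀ * ∑ t ∈ Finset.range T, δ ^ t := by
          rw [Finset.sum_add_distrib, htel T, ← Finset.mul_sum]
      _ = δ ^ T * (x T - s₀) := by
          rw [geom_sum_eq (by linarith : δ ≠ 1)]
          have hx0 : x 0 = s₀ := hs₀.symm
          rw [hx0]
          field_simp
          ring
  have heq : (fun T =>
        (∑ t ∈ Finset.range T,
          δ ^ t * (∑ a, (δ * s a + (1 - δ) * s₀ * 1 - sRep a) * v t a)) /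
        (∑ t ∈ Finset.range T, δ ^ t))
      = fun T => (δ ^ T * (x T - s₀)) / (∑ t ∈ Finset.range T, δ ^ t) := by
    funext T; rw [hnum T]
  rw [heq]
  have hden : Tendsto (fun T => ∑ t ∈ Finset.range T, δ ^ t) atTop (𝓝 (1 - δ)⁻¹) := by
    have := (hasSum_geometric_of_lt_one hδ0 hδ1).tendsto_sum_nat
    simpa using this
  have hnum0 : Tendsto (fun T => δ ^ T * (x T - s₀)) atTop (𝓝 0) := by
    have hpow : Tendsto (fun T : ℕ => δ ^ T) atTop (𝓝 0) :=
      tendsto_pow_atTop_nhds_zero_of_lt_one hδ0 hδ1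
    have hb : ∀ T, |δ ^ T * (x T - s₀)| ≤ δ ^ T * (1 + |s₀|) := by
      intro T
      rw [abs_mul, abs_of_nonneg (pow_nonneg hδ0 T)]
      apply mul_le_mul_of_nonneg_left _ (pow_nonneg hδ0 T)
      calc |x T - s₀| ≤ |x T| + |s₀| := abs_sub _ _
        _ ≤ 1 + |s₀| := by
            have := hxb T
            have : |x T| ≤ 1 := abs_le.2 ⟨by linarith [this.1], this.2⟩
            linarith
    have hA : Tendsto (fun T : ℕ => δ ^ T * (1 + |s₀|)) atTop (𝓝 0) := by
      simpa using hpow.mul_const (1 + |s₀|)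
    exact squeeze_zero_norm hb hA
  have := hnum0.div hden (inv_ne_zero (ne_of_gt (by linarith)))
  simpa only [zero_div, Pi.div_def] using this
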